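/- Let E0 ⊆ E be a bounded set and suppose the rate-function family satisfies the growth conditions (G1) and (G2). Fix r > 0 and δ ≥ 0, and let (θ_T)_{T>0} ⊆ Θ and (θ'_{0,T})_{T>0} ⊆ E0 be families such that a_T(θ'_{0,T} − θ_T) ∈ S^δ_{θ_T,r} for all T > 0. Then there exist constants C0 > 0 (depending only on E0) and T0 > 0 such that max{‖θ_T‖, a_T‖θ'_{0,T} − θ_T‖} ≤ C0 for all T ≥ T0. -/

import Mathlib

set_option autoImplicit false

open Filter Topology Metric Set MeasureTheory

noncomputable section

variable {E : Type*} [NormedAddCommGroup E] [NormedSpace ℝ E]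

/-- The sublevel set `S_{θ,r} = {ϑ ∈ E : I_θ(ϑ) ≤ r}` of the rate function. -/
def sublevelSet (I : E → E → ENNReal) (θ : E) (r : ℝ) : Set E :=
  {ϑ : E | I θ ϑ ≤ ENNReal.ofReal r}

/-- The open `δ`-fattening `S^δ_{θ,r}` of the sublevel set, where `S^0_{θ,r} = S_{θ,r}`;
for `δ > 0` it is the set of points at distance `< δ` from `S_{θ,r}`, i.e. the union of
open balls of radius `δ` around points of `S_{θ,r}`. -/
def fatSublevel (I : E → E → ENNReal) (θ : E) (r δ : ℝ) : Set E :=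
  if δ = 0 then sublevelSet I θ r
  else ⋃ ϑ ∈ sublevelSet I θ r, Metric.ball ϑ δ

/-- Growth condition (G1): for sequences `θ_n ∈ Θ` with `sup_n ‖θ_n‖ < ∞` and
`‖ϑ_n‖ → ∞`, `I_{θ_n}(ϑ_n) → ∞`. -/
def GrowthG1 (Θ : Set E) (I : E → E → ENNReal) : Prop :=
  ∀ θs ϑs : ℕ → E, (∀ n, θs n ∈ Θ) → (∃ C : ℝ, ∀ n, ‖θs n‖ ≤ C) →
    Tendsto (fun n => ‖ϑs n‖) atTop atTop →
    Tendsto (fun n => I (θs n) (ϑs n)) atTop (nhds ⊤)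

/-- Growth condition (G2): for sequences `θ_n ∈ Θ` with `‖θ_n‖ → ∞` and
`‖ϑ_n‖/‖θ_n‖ → ∞`, `limsup_n I_{θ_n}(ϑ_n) = ∞`. -/
def GrowthG2 (Θ : Set E) (I : E → E → ENNReal) : Prop :=
  ∀ θs ϑs : ℕ → E, (∀ n, θs n ∈ Θ) →
    Tendsto (fun n => ‖θs n‖) atTop atTop →
    Tendsto (fun n => ‖ϑs n‖ / ‖θs n‖) atTop atTop →
    Filter.limsup (fun n => I (θs n) (ϑs n)) atTop = ⊤

/-- The upper confidence bound `J̄^δ_{T,r}(θ') = sup {J(θ) : θ ∈ Θ, a_T (θ' - θ) ∈ S^δ_{θ,r}}`. -/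
def upperCB (Θ : Set E) (I : E → E → ENNReal) (J : E → ℝ) (r δ : ℝ) (a : ℝ → ℝ)
    (T : ℝ) (θ' : E) : ℝ :=
  sSup (J '' {θ : E | θ ∈ Θ ∧ a T • (θ' - θ) ∈ fatSublevel I θ r δ})

/-- The lower confidence bound `J̲^δ_{T,r}(θ') = inf {J(θ) : θ ∈ Θ, a_T (θ' - θ) ∈ S^δ_{θ,r}}`. -/
def lowerCB (Θ : Set E) (I : E → E → ENNReal) (J : E → ℝ) (r δ : ℝ) (a : ℝ → ℝ)
    (T : ℝ) (θ' : E) : ℝ :=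
  sInf (J '' {θ : E | θ ∈ Θ ∧ a T • (θ' - θ) ∈ fatSublevel I θ r δ})

/-- under the growth conditions (G1) and (G2), families `θ_T ∈ Θ` and
`θ'_{0,T}` in a bounded set `E0` with `a_T(θ'_{0,T} − θ_T) ∈ S^δ_{θ_T,r}` satisfy
`max (‖θ_T‖) (a_T ‖θ'_{0,T} − θ_T‖) ≤ C0` for all `T ≥ T0`. -/

private lemma exists_of_mem_fat {E : Type*} [NormedAddCommGroup E]
    {I : E → E → ENNReal} {θ : E} {r δ : ℝ} {x : E}
    (hx : x ∈ fatSublevel I θ r δ) :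
    ∃ ϑ, I θ ϑ ≤ ENNReal.ofReal r ∧ dist x ϑ ≤ δ := by
  unfold fatSublevel at hx
  split_ifs at hx with h
  · exact ⟨x, hx, by simp [h]⟩
  · simp only [Set.mem_iUnion, Metric.mem_ball] at hx
    obtain ⟨ϑ, hϑ, hd⟩ := hx
    exact ⟨ϑ, hϑ, hd.le⟩

theorem stmt1 (Θ : Set E) (hΘ : Θ.Nonempty) (I : E → E → ENNReal)
    (a : ℝ → ℝ) (hapos : ∀ T > 0, 0 < a T) (hatop : Tendsto a atTop atTop)
    (hG1 : GrowthG1 Θ I) (hG2 : GrowthG2 Θ I)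
    (r δ : ℝ) (hr : 0 < r) (hδ : 0 ≤ δ)
    (E0 : Set E) (hE0 : Bornology.IsBounded E0)
    (θf θ'f : ℝ → E)
    (hθf : ∀ T > 0, θf T ∈ Θ) (hθ'f : ∀ T > 0, θ'f T ∈ E0)
    (hfeas : ∀ T > 0, a T • (θ'f T - θf T) ∈ fatSublevel I (θf T) r δ) :
    ∃ C0 > 0, ∃ T0 > 0, ∀ T ≥ T0, max ‖θf T‖ (a T * ‖θ'f T - θf T‖) ≤ C0 := by
  by_contra hcon
  push_neg at hcon
  have hsel : ∀ n : ℕ, ∃ Tn : ℝ, Tn ≥ (n : ℝ) + 1 ∧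
      ((n : ℝ) + 1) < max ‖θf Tn‖ (a Tn * ‖θ'f Tn - θf Tn‖) := by
    intro n
    obtain ⟨Tn, hT, h⟩ := hcon ((n : ℝ) + 1) (by positivity) ((n : ℝ) + 1) (by positivity)
    exact ⟨Tn, hT, h⟩
  choose T hT1 hT2 using hsel
  have hTpos : ∀ n, 0 < T n := fun n => lt_of_lt_of_le (by positivity) (hT1 n)
  have hTtop : Tendsto T atTop atTop := by
    apply tendsto_atTop_mono (fun n => ?_) tendsto_natCast_atTop_atTop
    have := hT1 n; linarith
  have hfeas' : ∀ n, ∃ ϑ, I (θf (T n)) ϑ ≤ ENNReal.ofReal r ∧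
      dist (a (T n) • (θ'f (T n) - θf (T n))) ϑ ≤ δ :=
    fun n => exists_of_mem_fat (hfeas (T n) (hTpos n))
  choose ϑ hϑI hϑd using hfeas'
  obtain ⟨M, hM⟩ := hE0.exists_norm_le
  have hapos' : ∀ n, 0 < a (T n) := fun n => hapos _ (hTpos n)
  have hϑ_ge : ∀ n, a (T n) * ‖θ'f (T n) - θf (T n)‖ - δ ≤ ‖ϑ n‖ := by
    intro n
    have h1 : ‖a (T n) • (θ'f (T n) - θf (T n))‖ = a (T n) * ‖θ'f (T n) - θf (T n)‖ := by
      rw [norm_smul, Real.norm_eq_abs, abs_of_pos (hapos' n)]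
    have h2 := norm_sub_norm_le (a (T n) • (θ'f (T n) - θf (T n))) (ϑ n)
    have h3 : ‖a (T n) • (θ'f (T n) - θf (T n)) - ϑ n‖ ≤ δ := by
      rw [← dist_eq_norm]; exact hϑd n
    linarith
  have hlimsup_le : ∀ ψ : ℕ → ℕ,
      Filter.limsup (fun k => I (θf (T (ψ k))) (ϑ (ψ k))) atTop ≤ ENNReal.ofReal r :=
    fun ψ => Filter.limsup_le_of_le (by isBoundedDefault)
      (Filter.Eventually.of_forall fun k => hϑI (ψ k))
  by_cases hcase : Tendsto (fun n => ‖θf (T n)‖) atTop atTop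
  · -- Case G2
    have haT : Tendsto (fun n => a (T n)) atTop atTop := hatop.comp hTtop
    set K : ℝ := 2 * |M| + |δ| + 1 with hK
    have hratio : Tendsto (fun n => ‖ϑ n‖ / ‖θf (T n)‖) atTop atTop := by
      have hlim : Tendsto (fun n => a (T n) / 2 + (-1 : ℝ)) atTop atTop :=
        tendsto_atTop_add_const_right atTop (-1) (haT.atTop_div_const two_pos)
      apply tendsto_atTop_mono' atTop ?_ hlim
      filter_upwards [hcase.eventually_ge_atTop K, haT.eventually_ge_atTop 0] with n hKn ha0
      have hθpos : (0 : ℝ) < ‖θf (T n)‖ := by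
        have : (0 : ℝ) < K := by positivity
        linarith
      rw [le_div_iff₀ hθpos]
      have hM' : ‖θ'f (T n)‖ ≤ M := hM _ (hθ'f _ (hTpos n))
      have htri : ‖θf (T n)‖ - M ≤ ‖θ'f (T n) - θf (T n)‖ := by
        have := norm_sub_norm_le (θf (T n)) (θ'f (T n))
        have h2 : ‖θf (T n) - θ'f (T n)‖ = ‖θ'f (T n) - θf (T n)‖ := norm_sub_rev _ _
        linarith
      have hmul : a (T n) * (‖θf (T n)‖ - M) ≤ a (T n) * ‖θ'f (T n) - θf (T n)‖ :=
        mul_le_mul_of_nonneg_left htri ha0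
      have hge := hϑ_ge n
      have hMabs : M ≤ |M| := le_abs_self M
      have hδabs : δ ≤ |δ| := le_abs_self δ
      nlinarith [mul_le_mul_of_nonneg_left hKn ha0, abs_nonneg M, abs_nonneg δ]
    have hls := hG2 (fun n => θf (T n)) ϑ (fun n => hθf _ (hTpos n)) hcase hratio
    have hle := hlimsup_le id
    simp only [id_eq] at hle
    rw [hls] at hle
    exact ENNReal.ofReal_ne_top (top_le_iff.mp hle)
  · -- Case G1
    have hfreq : ∃ C : ℝ, ∃ᶠ n in atTop, ‖θf (T n)‖ < C := by
      by_contra h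
      push_neg at h
      apply hcase
      rw [Filter.tendsto_atTop]
      intro b
      have hb := h b
      exact hb
    obtain ⟨C, hC⟩ := hfreq
    obtain ⟨φ, hφmono, hφ⟩ := Filter.extraction_of_frequently_atTop hC
    have hb : Tendsto (fun k => a (T (φ k)) * ‖θ'f (T (φ k)) - θf (T (φ k))‖) atTop atTop := by
      apply tendsto_atTop_mono' atTop ?_ tendsto_natCast_atTop_atTop
      filter_upwards [eventually_ge_atTop ⌈C⌉₊] with k hk
      have h1 : C ≤ (k : ℝ) + 1 := by
        have h2 : C ≤ (⌈C⌉₊ : ℝ) := Nat.le_ceil C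
        have h3 : (⌈C⌉₊ : ℝ) ≤ (k : ℝ) := Nat.cast_le.mpr hk
        linarith
      have h4 : (k : ℝ) + 1 ≤ (φ k : ℝ) + 1 := by
        have h0 : k ≤ φ k := hφmono.le_apply
        have : (k : ℝ) ≤ (φ k : ℝ) := Nat.cast_le.mpr h0
        linarith
      rcases lt_max_iff.mp (hT2 (φ k)) with h5 | h5
      · exact absurd (hφ k) (not_lt.mpr (by linarith))
      · linarith
    have hϑtop : Tendsto (fun k => ‖ϑ (φ k)‖) atTop atTop := by
      have hlim : Tendsto
          (fun k => a (T (φ k)) * ‖θ'f (T (φ k)) - θf (T (φ k))‖ + (-δ)) atTop atTop :=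
        tendsto_atTop_add_const_right atTop (-δ) hb
      apply tendsto_atTop_mono' atTop ?_ hlim
      filter_upwards with k
      have := hϑ_ge (φ k)
      linarith
    have hI := hG1 (fun k => θf (T (φ k))) (fun k => ϑ (φ k))
      (fun k => hθf _ (hTpos (φ k))) ⟨C, fun k => (hφ k).le⟩ hϑtop
    have hls : Filter.limsup (fun k => I (θf (T (φ k))) (ϑ (φ k))) atTop = ⊤ :=
      hI.limsup_eq
    have hle := hlimsup_le φ
    rw [hls] at hle
    exact ENNReal.ofReal_ne_top (top_le_iff.mp hle)
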